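/- For all positive integers s, F_2(s) \ge T(s), where F_2(s) is the maximum over all 2-colorings (colors I and II) of the edges of the complete graph on vertex set {1,...,s} of the number of triples a<b<c with edges (a,b) and (b,c) colored I and edge (a,c) colored II; in fact the coloring assigning color II to (a,b) exactly when b-a is even achieves at least T(s) such triples. -/

import Mathlib

/-- The formula for `T(s)`, the maximum number of cyclic triangles in a tournament on
`s` vertices: `(s+1)s(s-1)/24` for odd `s` and `(s+2)s(s-2)/24` for even `s`. -/
def Tform (s : ℕ) : ℕ :=
  if s % 2 = 1 then (s + 1) * s * (s - 1) / 24 else (s + 2) * s * (s - 2) / 24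

/-- Given a 2-coloring `col` of the edges of the complete graph on `Fin s`
(`col a b` for `a < b`; `false` = color I, `true` = color II), the number of triples
`a < b < c` with `(a,b)` and `(b,c)` of color I and `(a,c)` of color II. -/
def tripCount2 (s : ℕ) (col : Fin s → Fin s → Bool) : ℕ :=
  (Finset.univ.filter (fun t : Fin s × Fin s × Fin s =>
    t.1 < t.2.1 ∧ t.2.1 < t.2.2 ∧ col t.1 t.2.1 = false ∧ col t.2.1 t.2.2 = false ∧
      col t.1 t.2.2 = true)).card

section Aux
open Finset

-- counting lemmas
lemma Acount (v : ℕ) : ∀ n, n ≤ v →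
    ((range n).filter (fun a => ¬ 2 ∣ (v - a))).card = (n + v % 2) / 2 := by
  intro n
  induction n with
  | zero => simp
  | succ n ih =>
    intro h
    rw [Finset.range_add_one, Finset.filter_insert]
    by_cases hc : ¬ 2 ∣ (v - n)
    · rw [if_pos hc, Finset.card_insert_of_notMem (by simp), ih (by omega)]
      omega
    · rw [if_neg hc, ih (by omega)]
      push_neg at hc
      omega

lemma Ccount (v : ℕ) : ∀ n,
    ((range n).filter (fun c => v < c ∧ ¬ 2 ∣ (c - v))).card = (n - v) / 2 := by
  intro n
  induction n with
  | zero => simp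
  | succ n ih =>
    rw [Finset.range_add_one, Finset.filter_insert]
    by_cases hc : v < n ∧ ¬ 2 ∣ (n - v)
    · rw [if_pos hc, Finset.card_insert_of_notMem (by simp), ih]
      omega
    · rw [if_neg hc, ih]
      rw [not_and_or, not_not] at hc
      omega

lemma Wsum (n : ℕ) : ∑ v ∈ range n, (v + 1) / 2 = n * n / 4 := by
  induction n with
  | zero => simp
  | succ n ih =>
    rw [Finset.sum_range_succ, ih]
    obtain ⟨k, hk | hk⟩ := Nat.even_or_odd' n <;> subst hk
    · have e1 : 2 * k * (2 * k) = 4 * (k * k) := by ring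
      have e2 : (2 * k + 1) * (2 * k + 1) = 4 * (k * k) + 4 * k + 1 := by ring
      omega
    · have e1 : (2 * k + 1) * (2 * k + 1) = 4 * (k * k) + 4 * k + 1 := by ring
      have e2 : (2 * k + 1 + 1) * (2 * k + 1 + 1) = 4 * (k * k) + 8 * k + 4 := by ring
      omega

def Esum (s : ℕ) : ℕ := ∑ v ∈ range s, ((v + 1) / 2) * ((s - v) / 2)

lemma Esum_step (s : ℕ) : Esum (s + 2) = Esum s + (s + 1) * (s + 1) / 4 := by
  have h1 : Esum (s + 2) = ∑ v ∈ range (s + 1), ((v + 1) / 2) * ((s + 2 - v) / 2) := by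
    rw [Esum, Finset.sum_range_succ]
    have h0 : (s + 2 - (s + 1)) / 2 = 0 := by omega
    rw [h0, Nat.mul_zero, Nat.add_zero]
  rw [h1]
  have h2 : ∀ v ∈ range (s + 1), ((v + 1) / 2) * ((s + 2 - v) / 2)
      = ((v + 1) / 2) * ((s - v) / 2) + (v + 1) / 2 := by
    intro v hv
    rw [Finset.mem_range] at hv
    have : (s + 2 - v) / 2 = (s - v) / 2 + 1 := by omega
    rw [this, Nat.mul_add, Nat.mul_one]
  rw [Finset.sum_congr rfl h2, Finset.sum_add_distrib, Wsum]
  have h3 : ∑ v ∈ range (s + 1), ((v + 1) / 2) * ((s - v) / 2) = Esum s := by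
    rw [Finset.sum_range_succ, Esum]
    simp
  rw [h3]

lemma Tform_step (s : ℕ) : Tform (s + 2) ≤ Tform s + (s + 1) * (s + 1) / 4 := by
  obtain ⟨k, hk | hk⟩ := Nat.even_or_odd' s <;> subst hk
  · -- s = 2k even
    rw [Tform, Tform, if_neg (by omega), if_neg (by omega)]
    have e1 : (2 * k + 2 + 2) * (2 * k + 2) * (2 * k + 2 - 2)
        = (2 * k + 2) * (2 * k) * (2 * k - 2) + 24 * (k * k + k) := by
      rcases Nat.eq_zero_or_pos k with h0 | h0
      · subst h0; norm_num
      · obtain ⟨j, rfl⟩ : ∃ j, k = j + 1 := ⟨k - 1, by omega⟩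
        have h1 : 2 * (j + 1) + 2 - 2 = 2 * (j + 1) := by omega
        have h2 : 2 * (j + 1) - 2 = 2 * j := by omega
        rw [h1, h2]; ring
    have e2 : (2 * k + 1) * (2 * k + 1) = 4 * (k * k) + 4 * k + 1 := by ring
    set A := (2 * k + 2) * (2 * k) * (2 * k - 2)
    set m := k * k
    omega
  · -- s = 2k+1 odd
    rw [Tform, Tform, if_pos (by omega), if_pos (by omega)]
    have e1 : (2 * k + 1 + 2 + 1) * (2 * k + 1 + 2) * (2 * k + 1 + 2 - 1)
        = (2 * k + 1 + 1) * (2 * k + 1) * (2 * k + 1 - 1) + 24 * ((k + 1) * (k + 1)) := by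
      have h1 : 2 * k + 1 + 2 - 1 = 2 * k + 2 := by omega
      have h2 : 2 * k + 1 - 1 = 2 * k := by omega
      rw [h1, h2]; ring
    have e2 : (2 * k + 1 + 1) * (2 * k + 1 + 1) = 4 * ((k + 1) * (k + 1)) := by ring
    set A := (2 * k + 1 + 1) * (2 * k + 1) * (2 * k + 1 - 1)
    set m := (k + 1) * (k + 1)
    omega

lemma Tform_le_Esum (s : ℕ) : Tform s ≤ Esum s := by
  induction s using Nat.twoStepInduction with
  | zero => simp [Tform, Esum]
  | one => simp [Tform, Esum]
  | more n ih _ =>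
    calc Tform (n + 2) ≤ Tform n + (n + 1) * (n + 1) / 4 := Tform_step n
    _ ≤ Esum n + (n + 1) * (n + 1) / 4 := by omega
    _ = Esum (n + 2) := (Esum_step n).symm

lemma card_filter_fin (s : ℕ) (p : ℕ → Prop) [DecidablePred p] :
    ((Finset.univ.filter (fun a : Fin s => p a.val))).card = ((range s).filter p).card := by
  rw [Finset.card_filter, Finset.card_filter,
    ← Fin.sum_univ_eq_sum_range (fun i => if p i then 1 else 0) s]

lemma trip_eq (s : ℕ) :
    tripCount2 s (fun a b => decide (2 ∣ (b.val - a.val))) = Esum s := by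
  rw [tripCount2, Finset.card_eq_sum_card_fiberwise
    (f := fun t : Fin s × Fin s × Fin s => t.2.1) (t := Finset.univ)
    (fun x _ => Finset.mem_univ _), Esum,
    ← Fin.sum_univ_eq_sum_range (fun v => ((v + 1) / 2) * ((s - v) / 2)) s]
  refine Finset.sum_congr rfl (fun b _ => ?_)
  have hA : ((Finset.univ.filter (fun a : Fin s => a.val < b.val ∧ ¬ 2 ∣ (b.val - a.val)))).card
      = (b.val + 1) / 2 := by
    rw [card_filter_fin s (fun n => n < b.val ∧ ¬ 2 ∣ (b.val - n))]
    have hset : (range s).filter (fun n => n < b.val ∧ ¬ 2 ∣ (b.val - n))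
        = (range b.val).filter (fun n => ¬ 2 ∣ (b.val - n)) := by
      ext n
      simp only [Finset.mem_filter, Finset.mem_range]
      have := b.isLt
      constructor
      · rintro ⟨_, h2, h3⟩; exact ⟨h2, h3⟩
      · rintro ⟨h1, h2⟩; exact ⟨by omega, h1, h2⟩
    rw [hset, Acount b.val b.val le_rfl]
    omega
  have hC : ((Finset.univ.filter (fun c : Fin s => b.val < c.val ∧ ¬ 2 ∣ (c.val - b.val)))).card
      = (s - b.val) / 2 := by
    rw [card_filter_fin s (fun n => b.val < n ∧ ¬ 2 ∣ (n - b.val)), Ccount b.val s]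
  rw [← hA, ← hC, ← Finset.card_product]
  apply Finset.card_nbij' (i := fun t : Fin s × Fin s × Fin s => (t.1, t.2.2))
    (j := fun p : Fin s × Fin s => (p.1, b, p.2))
  · intro t ht
    simp only [Finset.mem_coe, Finset.mem_filter, Finset.mem_univ, true_and, decide_eq_false_iff_not,
      decide_eq_true_eq, Fin.lt_def] at ht
    obtain ⟨⟨h1, h2, h3, h4, h5⟩, hb⟩ := ht
    subst hb
    simp only [Finset.mem_coe, Finset.mem_product, Finset.mem_filter, Finset.mem_univ, true_and]
    exact ⟨⟨h1, h3⟩, h2, h4⟩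
  · intro p hp
    simp only [Finset.mem_coe, Finset.mem_product, Finset.mem_filter, Finset.mem_univ, true_and] at hp
    obtain ⟨⟨h1, h3⟩, h2, h4⟩ := hp
    simp only [Finset.mem_coe, Finset.mem_filter, Finset.mem_univ, true_and, decide_eq_false_iff_not,
      decide_eq_true_eq, Fin.lt_def]
    exact ⟨⟨h1, h2, h3, h4, by omega⟩, trivial⟩
  · intro t ht
    simp only [Finset.mem_coe, Finset.mem_filter] at ht
    obtain ⟨_, hb⟩ := ht
    subst hb
    rfl
  · intro p _
    rfl

end Aux

/-- `F₂(s) ≥ T(s)`: the 2-coloring assigning color II to `(a,b)` exactly when `b - a` is even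
has at least `T(s)` triples `a < b < c` with `(a,b),(b,c)` of color I and `(a,c)` of
color II. -/
theorem F2_ge_T (s : ℕ) (hs : 0 < s) :
    Tform s ≤ tripCount2 s (fun a b => decide (2 ∣ (b.val - a.val))) := by
  calc Tform s ≤ Esum s := Tform_le_Esum s
  _ = tripCount2 s (fun a b => decide (2 ∣ (b.val - a.val))) := (trip_eq s).symm
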